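/- Fix ρ > 0 and τ > 0 with τ < ρσ. Then the function d₁ ↦ f(d₁,N₂;ρ,τ) is strictly concave on the interval [0, g(0,0,N₁;ρ)], and its unique maximizer on this interval is d₁ = g(0,0,N₁+N₂;ρ). -/
import Mathlib
set_option maxHeartbeats 1600000


/-- `B(d,N;ρ)` with parameters `σ φ D T`. -/
noncomputable def B (σ φ D T ρ N d : ℝ) : ℝ :=
  φ * D * (1 + ρ * φ * D / T) - σ * N * d - ρ * σ ^ 2 * N * d ^ 2

/-- `g(d,N',N;ρ)` with parameters `σ φ D T`. -/
noncomputable def g (σ φ D T ρ N' N d : ℝ) : ℝ :=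
  (-1 + Real.sqrt (1 + (4 * ρ / N) * B σ φ D T ρ N' d)) / (2 * σ * ρ)

/-- `f(d₁,N₂;ρ,τ)` with parameters `σ φ D T` and `N₁`. -/
noncomputable def f (σ φ D T ρ τ N₁ N₂ d₁ : ℝ) : ℝ :=
  N₁ * d₁ + N₂ * g σ φ D T ρ N₁ N₂ d₁ +
    τ * (N₁ * d₁ ^ 2 + N₂ * (g σ φ D T ρ N₁ N₂ d₁) ^ 2)

lemma g_spec (σ φ D T ρ N' N d : ℝ) (hσ : 0 < σ) (hρ : 0 < ρ) (hN : 0 < N)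
    (hB : 0 ≤ B σ φ D T ρ N' d) :
    0 ≤ g σ φ D T ρ N' N d ∧
      N * (σ * g σ φ D T ρ N' N d + ρ * σ ^ 2 * (g σ φ D T ρ N' N d) ^ 2) =
        B σ φ D T ρ N' d := by
  have hu : 0 ≤ 1 + (4 * ρ / N) * B σ φ D T ρ N' d := by
    have : 0 ≤ (4 * ρ / N) * B σ φ D T ρ N' d := mul_nonneg (by positivity) hB
    linarith
  set s := Real.sqrt (1 + (4 * ρ / N) * B σ φ D T ρ N' d) with hs
  have hs2 : s ^ 2 = 1 + (4 * ρ / N) * B σ φ D T ρ N' d := Real.sq_sqrt hu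
  have hs1 : 1 ≤ s := by
    rw [show (1:ℝ) = Real.sqrt 1 by simp [Real.sqrt_one]]
    exact Real.sqrt_le_sqrt
      (by linarith [mul_nonneg (le_of_lt (by positivity : (0:ℝ) < 4 * ρ / N)) hB])
  have hgval : g σ φ D T ρ N' N d = (-1 + s) / (2 * σ * ρ) := by rw [g, hs]
  constructor
  · rw [hgval]; exact div_nonneg (by linarith) (by positivity)
  · rw [hgval]
    have hq : σ * ((-1 + s) / (2 * σ * ρ)) + ρ * σ ^ 2 * ((-1 + s) / (2 * σ * ρ)) ^ 2
        = (s ^ 2 - 1) / (4 * ρ) := by field_simp; ring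
    rw [hq, hs2]
    field_simp
    ring

lemma f_affine (σ φ D T ρ τ N₁ N₂ d : ℝ) (hσ : 0 < σ) (hρ : 0 < ρ) (hN₂ : 0 < N₂)
    (hB : 0 ≤ B σ φ D T ρ N₁ d) :
    f σ φ D T ρ τ N₁ N₂ d =
      (τ * (φ * D * (1 + ρ * φ * D / T)) / (σ ^ 2 * ρ) + τ * N₂ / (2 * σ ^ 2 * ρ ^ 2)
          - N₂ / (2 * σ * ρ))
        + (N₁ - τ * N₁ / (σ * ρ)) * d
        + (N₂ * (ρ * σ - τ) / (2 * ρ ^ 2 * σ ^ 2)) *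
            Real.sqrt (1 + (4 * ρ / N₂) * B σ φ D T ρ N₁ d) := by
  have hu : 0 ≤ 1 + (4 * ρ / N₂) * B σ φ D T ρ N₁ d := by
    have : 0 ≤ (4 * ρ / N₂) * B σ φ D T ρ N₁ d := mul_nonneg (by positivity) hB
    linarith
  set s := Real.sqrt (1 + (4 * ρ / N₂) * B σ φ D T ρ N₁ d) with hs
  have hs2 : s ^ 2 = 1 + (4 * ρ / N₂) * B σ φ D T ρ N₁ d := Real.sq_sqrt hu
  have hgval : g σ φ D T ρ N₁ N₂ d = (-1 + s) / (2 * σ * ρ) := by rw [g, hs]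
  rw [f, hgval]
  have e2 : ((-1 + s) / (2 * σ * ρ)) ^ 2 = (s ^ 2 - 2 * s + 1) / (4 * σ ^ 2 * ρ ^ 2) := by
    ring
  rw [e2, hs2, B]
  field_simp
  ring


/-- Strict concavity step for `sqrt`. -/
lemma sqrt_combo_lt (a ux uy uz : ℝ) (ha : 0 < a) (hb : 0 < 1 - a)
    (hux : 0 ≤ ux) (huy : 0 ≤ uy)
    (hlt : a * ux + (1 - a) * uy < uz) :
    a * Real.sqrt ux + (1 - a) * Real.sqrt uy < Real.sqrt uz := by
  have huz : 0 ≤ uz := by nlinarith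
  have hsx2 : Real.sqrt ux ^ 2 = ux := Real.sq_sqrt hux
  have hsy2 : Real.sqrt uy ^ 2 = uy := Real.sq_sqrt huy
  have hsz2 : Real.sqrt uz ^ 2 = uz := Real.sq_sqrt huz
  have hsx0 : 0 ≤ Real.sqrt ux := Real.sqrt_nonneg _
  have hsy0 : 0 ≤ Real.sqrt uy := Real.sqrt_nonneg _
  have hsz0 : 0 ≤ Real.sqrt uz := Real.sqrt_nonneg _
  set sx := Real.sqrt ux
  set sy := Real.sqrt uy
  set sz := Real.sqrt uz
  have h1 : (a * sx + (1 - a) * sy) ^ 2 ≤ a * ux + (1 - a) * uy := by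
    nlinarith [mul_nonneg (mul_nonneg ha.le hb.le) (sq_nonneg (sx - sy))]
  have hA : 0 ≤ a * sx + (1 - a) * sy := by positivity
  nlinarith [h1, hlt, hsz2, hA, hsz0]

/-- The Cauchy–Schwarz / strict convexity step for the maximizer. -/
lemma Q_aux (σ ρ n1 n2 d y ds : ℝ) (hσ : 0 < σ) (hρ : 0 < ρ)
    (hn1 : 0 < n1) (hn2 : 0 < n2) (hds : 0 ≤ ds) (hdd : 0 < (d - ds) ^ 2)
    (hcon : n1 * (σ * d + ρ * σ ^ 2 * d ^ 2) + n2 * (σ * y + ρ * σ ^ 2 * y ^ 2)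
      = (n1 + n2) * (σ * ds + ρ * σ ^ 2 * ds ^ 2)) :
    (n1 + n2) * ds ^ 2 < n1 * d ^ 2 + n2 * y ^ 2 := by
  have hid : σ * (1 + 2 * ρ * σ * ds) * ((n1 * d ^ 2 + n2 * y ^ 2) - (n1 + n2) * ds ^ 2)
      = σ * (n1 * (d - ds) ^ 2 + n2 * (y - ds) ^ 2) := by
    linear_combination (2 * ds) * hcon
  have hP : 0 < σ * (1 + 2 * ρ * σ * ds) := by positivity
  nlinarith [hid, hP, mul_pos (mul_pos hσ hn1) hdd,
    mul_nonneg (mul_nonneg hσ.le hn2.le) (sq_nonneg (y - ds))]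

/-- if `τ < ρσ` then `f(·,N₂;ρ,τ)` is strictly concave on
`[0, g(0,0,N₁;ρ)]`, with unique maximizer `g(0,0,N₁+N₂;ρ)`. -/
theorem stmt_5 (σ φ D T : ℝ) (hσ : 0 < σ) (hφ : 0 < φ) (hD : 0 < D) (hT : 0 < T)
    (N₁ N₂ : ℕ) (hN₁ : 0 < N₁) (hN₂ : 0 < N₂)
    (ρ τ : ℝ) (hρ : 0 < ρ) (hτ : 0 < τ) (hτρ : τ < ρ * σ) :
    StrictConcaveOn ℝ (Set.Icc 0 (g σ φ D T ρ 0 N₁ 0)) (fun d₁ => f σ φ D T ρ τ N₁ N₂ d₁) ∧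
    g σ φ D T ρ 0 ((N₁ : ℝ) + (N₂ : ℝ)) 0 ∈ Set.Icc 0 (g σ φ D T ρ 0 N₁ 0) ∧
    ∀ d₁ ∈ Set.Icc 0 (g σ φ D T ρ 0 N₁ 0), d₁ ≠ g σ φ D T ρ 0 ((N₁ : ℝ) + (N₂ : ℝ)) 0 →
      f σ φ D T ρ τ N₁ N₂ d₁ < f σ φ D T ρ τ N₁ N₂ (g σ φ D T ρ 0 ((N₁ : ℝ) + (N₂ : ℝ)) 0) := by
  have hn1 : (0:ℝ) < (N₁ : ℝ) := by exact_mod_cast hN₁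
  have hn2 : (0:ℝ) < (N₂ : ℝ) := by exact_mod_cast hN₂
  set n1 : ℝ := (N₁ : ℝ)
  set n2 : ℝ := (N₂ : ℝ)
  have hC : (0:ℝ) < φ * D * (1 + ρ * φ * D / T) := by positivity
  have hB0 : B σ φ D T ρ (0:ℝ) (0:ℝ) = φ * D * (1 + ρ * φ * D / T) := by rw [B]; ring
  set g0 : ℝ := g σ φ D T ρ 0 n1 0 with hg0def
  set ds : ℝ := g σ φ D T ρ 0 (n1 + n2) 0 with hdsdef
  obtain ⟨hg0_nonneg, hg0_eq⟩ :=
    g_spec σ φ D T ρ 0 n1 0 hσ hρ hn1 (by rw [hB0]; exact hC.le)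
  rw [hB0, ← hg0def] at hg0_eq
  rw [← hg0def] at hg0_nonneg
  obtain ⟨hds_nonneg, hds_eq⟩ :=
    g_spec σ φ D T ρ 0 (n1 + n2) 0 hσ hρ (by linarith) (by rw [hB0]; exact hC.le)
  rw [hB0, ← hdsdef] at hds_eq
  rw [← hdsdef] at hds_nonneg
  -- ds ≤ g0
  have hψds_nonneg : 0 ≤ σ * ds + ρ * σ ^ 2 * ds ^ 2 := by positivity
  have hψle : σ * ds + ρ * σ ^ 2 * ds ^ 2 ≤ σ * g0 + ρ * σ ^ 2 * g0 ^ 2 := by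
    nlinarith [mul_nonneg hn2.le hψds_nonneg]
  have hmono : ∀ u v : ℝ, 0 ≤ u → 0 ≤ v →
      σ * u + ρ * σ ^ 2 * u ^ 2 ≤ σ * v + ρ * σ ^ 2 * v ^ 2 → u ≤ v := by
    intro u v hu hv h
    by_contra hc
    push_neg at hc
    have h1 : v ^ 2 ≤ u ^ 2 := by nlinarith
    have h2 : ρ * σ ^ 2 * v ^ 2 ≤ ρ * σ ^ 2 * u ^ 2 :=
      mul_le_mul_of_nonneg_left h1 (by positivity)
    nlinarith
  have hds_le : ds ≤ g0 := hmono ds g0 hds_nonneg hg0_nonneg hψle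
  -- B is nonneg on the interval
  have hBd : ∀ d ∈ Set.Icc (0:ℝ) g0, 0 ≤ B σ φ D T ρ n1 d := by
    intro d hd
    obtain ⟨hd0, hdg0⟩ := hd
    rw [B]
    have h1 : d ^ 2 ≤ g0 ^ 2 := by nlinarith
    have h2 : ρ * σ ^ 2 * d ^ 2 ≤ ρ * σ ^ 2 * g0 ^ 2 :=
      mul_le_mul_of_nonneg_left h1 (by positivity)
    have h3 : σ * d ≤ σ * g0 := mul_le_mul_of_nonneg_left hdg0 hσ.le
    have h4 : n1 * (σ * d + ρ * σ ^ 2 * d ^ 2) ≤ n1 * (σ * g0 + ρ * σ ^ 2 * g0 ^ 2) :=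
      mul_le_mul_of_nonneg_left (by linarith) hn1.le
    nlinarith [hg0_eq, h4]
  have hds_mem : ds ∈ Set.Icc (0:ℝ) g0 := ⟨hds_nonneg, hds_le⟩
  refine ⟨⟨convex_Icc _ _, ?_⟩, hds_mem, ?_⟩
  · -- strict concavity
    intro x hx y hy hxy a b ha hb hab
    have hz : a * x + b * y ∈ Set.Icc (0:ℝ) g0 := by
      have := (convex_Icc (0:ℝ) g0) hx hy ha.le hb.le hab
      simpa using this
    simp only [smul_eq_mul]
    rw [f_affine σ φ D T ρ τ n1 n2 x hσ hρ hn2 (hBd x hx),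
        f_affine σ φ D T ρ τ n1 n2 y hσ hρ hn2 (hBd y hy),
        f_affine σ φ D T ρ τ n1 n2 (a * x + b * y) hσ hρ hn2 (hBd _ hz)]
    have hb' : b = 1 - a := by linarith
    subst hb'
    have hux : 0 ≤ 1 + (4 * ρ / n2) * B σ φ D T ρ n1 x := by
      have := mul_nonneg (by positivity : (0:ℝ) ≤ 4 * ρ / n2) (hBd x hx); linarith
    have huy : 0 ≤ 1 + (4 * ρ / n2) * B σ φ D T ρ n1 y := by
      have := mul_nonneg (by positivity : (0:ℝ) ≤ 4 * ρ / n2) (hBd y hy); linarith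
    have hBconc : B σ φ D T ρ n1 (a * x + (1 - a) * y)
        = a * B σ φ D T ρ n1 x + (1 - a) * B σ φ D T ρ n1 y
          + ρ * σ ^ 2 * n1 * (a * (1 - a) * (x - y) ^ 2) := by
      rw [B, B, B]; ring
    have hkey : 1 + (4 * ρ / n2) * B σ φ D T ρ n1 (a * x + (1 - a) * y)
        = (a * (1 + (4 * ρ / n2) * B σ φ D T ρ n1 x)
            + (1 - a) * (1 + (4 * ρ / n2) * B σ φ D T ρ n1 y))
          + (4 * ρ / n2) * (ρ * σ ^ 2 * n1 * (a * (1 - a) * (x - y) ^ 2)) := by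
      rw [hBconc]; ring
    have hxy2 : 0 < (x - y) ^ 2 := by
      have : x - y ≠ 0 := sub_ne_zero.mpr hxy
      positivity
    have hcombo_lt : a * (1 + (4 * ρ / n2) * B σ φ D T ρ n1 x)
        + (1 - a) * (1 + (4 * ρ / n2) * B σ φ D T ρ n1 y)
        < 1 + (4 * ρ / n2) * B σ φ D T ρ n1 (a * x + (1 - a) * y) := by
      have hpos : 0 < (4 * ρ / n2) * (ρ * σ ^ 2 * n1 * (a * (1 - a) * (x - y) ^ 2)) := by
        positivity
      rw [hkey]; linarith only [hpos]
    have hslt := sqrt_combo_lt a _ _ _ ha hb hux huy hcombo_lt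
    have hγ : 0 < n2 * (ρ * σ - τ) / (2 * ρ ^ 2 * σ ^ 2) := by
      have : 0 < ρ * σ - τ := by linarith
      positivity
    linarith only [mul_lt_mul_of_pos_left hslt hγ]
  · -- unique maximizer
    intro d hd hne
    obtain ⟨hy0, hyeq⟩ := g_spec σ φ D T ρ n1 n2 d hσ hρ hn2 (hBd d hd)
    obtain ⟨hw0, hweq⟩ := g_spec σ φ D T ρ n1 n2 ds hσ hρ hn2 (hBd ds hds_mem)
    set y := g σ φ D T ρ n1 n2 d with hydef
    set w := g σ φ D T ρ n1 n2 ds with hwdef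
    rw [B] at hyeq hweq
    -- w = ds
    have hψw : n2 * (σ * w + ρ * σ ^ 2 * w ^ 2) = n2 * (σ * ds + ρ * σ ^ 2 * ds ^ 2) := by
      linear_combination hweq - hds_eq
    have hfac : (w - ds) * (σ + ρ * σ ^ 2 * (w + ds)) = 0 := by
      have := mul_left_cancel₀ (ne_of_gt hn2) hψw
      linear_combination this
    have hwds : w = ds := by
      rcases mul_eq_zero.mp hfac with h | h
      · linarith [sub_eq_zero.mp h]
      · exfalso
        have : 0 < σ + ρ * σ ^ 2 * (w + ds) := by positivity
        linarith
    rw [hwds] at hweq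
    -- representations of f
    have hfd : σ * f σ φ D T ρ τ n1 n2 d
        = φ * D * (1 + ρ * φ * D / T)
          - (ρ * σ ^ 2 - τ * σ) * (n1 * d ^ 2 + n2 * y ^ 2) := by
      rw [f, ← hydef]
      linear_combination hyeq
    have hfds : σ * f σ φ D T ρ τ n1 n2 ds
        = φ * D * (1 + ρ * φ * D / T)
          - (ρ * σ ^ 2 - τ * σ) * ((n1 + n2) * ds ^ 2) := by
      rw [f, ← hwdef, hwds]
      linear_combination hweq
    -- the constraint
    have hcon : n1 * (σ * d + ρ * σ ^ 2 * d ^ 2) + n2 * (σ * y + ρ * σ ^ 2 * y ^ 2)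
        = (n1 + n2) * (σ * ds + ρ * σ ^ 2 * ds ^ 2) := by
      linear_combination hyeq - hds_eq
    have hdd : 0 < (d - ds) ^ 2 := by
      have : d - ds ≠ 0 := sub_ne_zero.mpr hne
      positivity
    have hQ : (n1 + n2) * ds ^ 2 < n1 * d ^ 2 + n2 * y ^ 2 :=
      Q_aux σ ρ n1 n2 d y ds hσ hρ hn1 hn2 hds_nonneg hdd hcon
    have hστ : 0 < ρ * σ ^ 2 - τ * σ := by nlinarith
    have hmul : σ * f σ φ D T ρ τ n1 n2 d < σ * f σ φ D T ρ τ n1 n2 ds := by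
      rw [hfd, hfds]
      linarith only [mul_lt_mul_of_pos_left hQ hστ]
    exact lt_of_mul_lt_mul_left hmul hσ.le
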